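/- A pair {x, y} of distinct vertices of the graph G = G(Q,S) has distance at least 4 in G if and only if {x, y} = {v, w}, or {x, y} = {q*, w}, or {x, y} = {v, q_i} for some element q_i ∈ Q. -/

import Mathlib

/-- Raw vertex names for the graph `G(Q,S)`: elements `q_i`, hyperedges `S_j`,
copies `S_j'`, subdivision vertices `q^i_j`, and special vertices `q*`, `u₁`, `u₂`, `v`, `w`. -/
inductive HVertex (m n : ℕ) : Type
  | elt : Fin m → HVertex m n
  | hyp : Fin n → HVertex m n
  | copy : Fin n → HVertex m n
  | sub : Fin m → Fin n → HVertex m n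
  | qstar : HVertex m n
  | u1 : HVertex m n
  | u2 : HVertex m n
  | v : HVertex m n
  | w : HVertex m n

/-- A raw vertex name is an actual vertex of `G(Q,S)`: the subdivision vertex `q^i_j`
exists only when `q_i ∈ S_j`. -/
def HVertex.OK {m n : ℕ} (S : Fin n → Set (Fin m)) : HVertex m n → Prop
  | .sub i j => i ∈ S j
  | _ => True

/-- The vertex set of `G(Q,S)`. -/
def GVertex {m n : ℕ} (S : Fin n → Set (Fin m)) : Type := {x : HVertex m n // x.OK S}

/-- The (asymmetrically listed) edges of `G(Q,S)`:
`q^i_j q_i`, `q^i_j S_j`, `q_i S_j'` (for `q_i ∈ S_j`), `S_j S_k'` (all `j,k`),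
`q* u₁`, `q* u₂`, `q* q^i_j`, `u₁ S_j`, `u₂ S_j`, `u₁ v`, `u₂ v`, `w S_j'`. -/
def baseAdj {m n : ℕ} (S : Fin n → Set (Fin m)) : HVertex m n → HVertex m n → Prop
  | .sub i _, .elt i' => i = i'
  | .sub _ j, .hyp j' => j = j'
  | .elt i, .copy j => i ∈ S j
  | .hyp _, .copy _ => True
  | .qstar, .u1 => True
  | .qstar, .u2 => True
  | .qstar, .sub _ _ => True
  | .u1, .hyp _ => True
  | .u2, .hyp _ => True
  | .u1, .v => True
  | .u2, .v => True
  | .w, .copy _ => True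
  | _, _ => False

/-- The graph `G = G(Q,S)`. -/
def GQS {m n : ℕ} (S : Fin n → Set (Fin m)) : SimpleGraph (GVertex S) :=
  SimpleGraph.fromRel (fun a b => baseAdj S a.1 b.1)

-- auxiliary
section Aux
variable {m n : ℕ} {S : Fin n → Set (Fin m)}

lemma adjL {x y : GVertex S} (hne : x.1 ≠ y.1) (h : baseAdj S x.1 y.1) : (GQS S).Adj x y :=
  ⟨fun hh => hne (congrArg Subtype.val hh), Or.inl h⟩

lemma adjR {x y : GVertex S} (hne : x.1 ≠ y.1) (h : baseAdj S y.1 x.1) : (GQS S).Adj x y :=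
  ⟨fun hh => hne (congrArg Subtype.val hh), Or.inr h⟩

lemma dist1 {x y : GVertex S} (h : (GQS S).Adj x y) : (GQS S).dist x y ≤ 3 :=
  le_trans (SimpleGraph.dist_le (SimpleGraph.Walk.cons h .nil)) (by simp)

lemma dist2 {x y : GVertex S} (a : GVertex S) (h1 : (GQS S).Adj x a) (h2 : (GQS S).Adj a y) :
    (GQS S).dist x y ≤ 3 :=
  le_trans (SimpleGraph.dist_le (.cons h1 (.cons h2 .nil))) (by simp)

lemma dist3 {x y : GVertex S} (a b : GVertex S) (h1 : (GQS S).Adj x a) (h2 : (GQS S).Adj a b)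
    (h3 : (GQS S).Adj b y) : (GQS S).dist x y ≤ 3 :=
  SimpleGraph.dist_le (.cons h1 (.cons h2 (.cons h3 .nil)))

def lev1 {m n : ℕ} : HVertex m n → ℤ
  | .v => 0 | .u1 => 1 | .u2 => 1 | .qstar => 2 | .hyp _ => 2
  | .sub _ _ => 3 | .copy _ => 3 | .elt _ => 4 | .w => 4

def lev2 {m n : ℕ} : HVertex m n → ℤ
  | .w => 0 | .copy _ => 1 | .elt _ => 2 | .hyp _ => 2
  | .sub _ _ => 3 | .u1 => 3 | .u2 => 3 | .qstar => 4 | .v => 4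

lemma lev1_lip {a b : HVertex m n} (h : baseAdj S a b) : |lev1 a - lev1 b| ≤ 1 := by
  cases a <;> cases b <;> simp_all [baseAdj, lev1]

lemma lev2_lip {a b : HVertex m n} (h : baseAdj S a b) : |lev2 a - lev2 b| ≤ 1 := by
  cases a <;> cases b <;> simp_all [baseAdj, lev2]

lemma lev_walk (f : HVertex m n → ℤ) (hf : ∀ a b : HVertex m n, baseAdj S a b → |f a - f b| ≤ 1)
    {x y : GVertex S} (p : (GQS S).Walk x y) : |f x.1 - f y.1| ≤ p.length := by
  induction p with
  | nil => simp
  | cons h p ih =>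
    rename_i a b c
    have h1 : |f a.1 - f b.1| ≤ 1 := by
      rcases h.2 with h' | h'
      · exact hf _ _ h'
      · rw [abs_sub_comm]; exact hf _ _ h'
    calc |f a.1 - f c.1| ≤ |f a.1 - f b.1| + |f b.1 - f c.1| := abs_sub_le _ _ _
    _ ≤ 1 + p.length := by push_cast; exact add_le_add h1 ih
    _ = _ := by push_cast [SimpleGraph.Walk.length_cons]; ring

lemma dist_ge (f : HVertex m n → ℤ) (hf : ∀ a b : HVertex m n, baseAdj S a b → |f a - f b| ≤ 1)
    {x y : GVertex S} (hr : (GQS S).Reachable x y) (h4 : 4 ≤ |f x.1 - f y.1|) :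
    4 ≤ (GQS S).dist x y := by
  obtain ⟨p, hp⟩ := hr.exists_walk_length_eq_dist
  have := lev_walk f hf p
  rw [hp] at this
  exact_mod_cast le_trans h4 this

section Main
variable {m n : ℕ} {S : Fin n → Set (Fin m)}

lemma ub (hn : 2 ≤ n) (hSlast : S ⟨n - 1, Nat.sub_lt (by omega) Nat.one_pos⟩ = Set.univ) (x y : GVertex S) :
    (GQS S).dist x y ≤ 3 ∨
    (x.1 = .v ∧ y.1 = .w) ∨ (x.1 = .w ∧ y.1 = .v) ∨
    (x.1 = .qstar ∧ y.1 = .w) ∨ (x.1 = .w ∧ y.1 = .qstar) ∨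
    (∃ i, x.1 = .v ∧ y.1 = .elt i) ∨ (∃ i, x.1 = .elt i ∧ y.1 = .v) := by
  have h0 : 0 < n := by omega
  have hN : n - 1 < n := by omega
  set j0 : Fin n := ⟨0, h0⟩ with hj0
  set jN : Fin n := ⟨n - 1, hN⟩ with hjN
  have hSl : S jN = Set.univ := hSlast
  have hmem : ∀ i : Fin m, i ∈ S jN := fun i => by rw [hSl]; trivial
  obtain ⟨a, ha⟩ := x
  obtain ⟨b, hb⟩ := y
  cases a with
  | elt i =>
    cases b with
    | elt i' => exact Or.inl (dist2 ⟨.copy jN, trivial⟩ (adjL nofun (hmem i)) (adjR nofun (hmem i')))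
    | hyp j => exact Or.inl (dist2 ⟨.copy jN, trivial⟩ (adjL nofun (hmem i)) (adjR nofun trivial))
    | copy j => exact Or.inl (dist3 ⟨.copy jN, trivial⟩ ⟨.hyp j0, trivial⟩
        (adjL nofun (hmem i)) (adjR nofun trivial) (adjL nofun trivial))
    | sub i' j' => exact Or.inl (dist3 ⟨.copy jN, trivial⟩ ⟨.hyp j', trivial⟩
        (adjL nofun (hmem i)) (adjR nofun trivial) (adjR nofun rfl))
    | qstar => exact Or.inl (dist2 ⟨.sub i jN, hmem i⟩ (adjR nofun rfl) (adjR nofun trivial))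
    | u1 => exact Or.inl (dist3 ⟨.copy jN, trivial⟩ ⟨.hyp j0, trivial⟩
        (adjL nofun (hmem i)) (adjR nofun trivial) (adjR nofun trivial))
    | u2 => exact Or.inl (dist3 ⟨.copy jN, trivial⟩ ⟨.hyp j0, trivial⟩
        (adjL nofun (hmem i)) (adjR nofun trivial) (adjR nofun trivial))
    | v => exact Or.inr (Or.inr (Or.inr (Or.inr (Or.inr (Or.inr ⟨i, rfl, rfl⟩)))))
    | w => exact Or.inl (dist2 ⟨.copy jN, trivial⟩ (adjL nofun (hmem i)) (adjR nofun trivial))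
  | hyp j =>
    cases b with
    | elt i => exact Or.inl (dist2 ⟨.copy jN, trivial⟩ (adjL nofun trivial) (adjR nofun (hmem i)))
    | hyp j' => exact Or.inl (dist2 ⟨.copy j0, trivial⟩ (adjL nofun trivial) (adjR nofun trivial))
    | copy j' => exact Or.inl (dist1 (adjL nofun trivial))
    | sub i j' => exact Or.inl (dist3 ⟨.u1, trivial⟩ ⟨.qstar, trivial⟩
        (adjR nofun trivial) (adjR nofun trivial) (adjL nofun trivial))
    | qstar => exact Or.inl (dist2 ⟨.u1, trivial⟩ (adjR nofun trivial) (adjR nofun trivial))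
    | u1 => exact Or.inl (dist1 (adjR nofun trivial))
    | u2 => exact Or.inl (dist1 (adjR nofun trivial))
    | v => exact Or.inl (dist2 ⟨.u1, trivial⟩ (adjR nofun trivial) (adjL nofun trivial))
    | w => exact Or.inl (dist2 ⟨.copy j0, trivial⟩ (adjL nofun trivial) (adjR nofun trivial))
  | copy j =>
    cases b with
    | elt i => exact Or.inl (dist3 ⟨.hyp j0, trivial⟩ ⟨.copy jN, trivial⟩
        (adjR nofun trivial) (adjL nofun trivial) (adjR nofun (hmem i)))
    | hyp j' => exact Or.inl (dist1 (adjR nofun trivial))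
    | copy j' => exact Or.inl (dist2 ⟨.hyp j0, trivial⟩ (adjR nofun trivial) (adjL nofun trivial))
    | sub i j' => exact Or.inl (dist2 ⟨.hyp j', trivial⟩ (adjR nofun trivial) (adjR nofun rfl))
    | qstar => exact Or.inl (dist3 ⟨.hyp j0, trivial⟩ ⟨.u1, trivial⟩
        (adjR nofun trivial) (adjR nofun trivial) (adjR nofun trivial))
    | u1 => exact Or.inl (dist2 ⟨.hyp j0, trivial⟩ (adjR nofun trivial) (adjR nofun trivial))
    | u2 => exact Or.inl (dist2 ⟨.hyp j0, trivial⟩ (adjR nofun trivial) (adjR nofun trivial))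
    | v => exact Or.inl (dist3 ⟨.hyp j0, trivial⟩ ⟨.u1, trivial⟩
        (adjR nofun trivial) (adjR nofun trivial) (adjL nofun trivial))
    | w => exact Or.inl (dist1 (adjR nofun trivial))
  | sub i j =>
    cases b with
    | elt i' => exact Or.inl (dist3 ⟨.hyp j, trivial⟩ ⟨.copy jN, trivial⟩
        (adjL nofun rfl) (adjL nofun trivial) (adjR nofun (hmem i')))
    | hyp j' => exact Or.inl (dist3 ⟨.qstar, trivial⟩ ⟨.u1, trivial⟩
        (adjR nofun trivial) (adjL nofun trivial) (adjL nofun trivial))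
    | copy j' => exact Or.inl (dist2 ⟨.hyp j, trivial⟩ (adjL nofun rfl) (adjL nofun trivial))
    | sub i' j' => exact Or.inl (dist2 ⟨.qstar, trivial⟩ (adjR nofun trivial) (adjL nofun trivial))
    | qstar => exact Or.inl (dist1 (adjR nofun trivial))
    | u1 => exact Or.inl (dist2 ⟨.qstar, trivial⟩ (adjR nofun trivial) (adjL nofun trivial))
    | u2 => exact Or.inl (dist2 ⟨.qstar, trivial⟩ (adjR nofun trivial) (adjL nofun trivial))
    | v => exact Or.inl (dist3 ⟨.qstar, trivial⟩ ⟨.u1, trivial⟩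
        (adjR nofun trivial) (adjL nofun trivial) (adjL nofun trivial))
    | w => exact Or.inl (dist3 ⟨.hyp j, trivial⟩ ⟨.copy j0, trivial⟩
        (adjL nofun rfl) (adjL nofun trivial) (adjR nofun trivial))
  | qstar =>
    cases b with
    | elt i => exact Or.inl (dist2 ⟨.sub i jN, hmem i⟩ (adjL nofun trivial) (adjL nofun rfl))
    | hyp j => exact Or.inl (dist2 ⟨.u1, trivial⟩ (adjL nofun trivial) (adjL nofun trivial))
    | copy j => exact Or.inl (dist3 ⟨.u1, trivial⟩ ⟨.hyp j0, trivial⟩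
        (adjL nofun trivial) (adjL nofun trivial) (adjL nofun trivial))
    | sub i j => exact Or.inl (dist1 (adjL nofun trivial))
    | qstar => exact Or.inl (dist2 ⟨.u1, trivial⟩ (adjL nofun trivial) (adjR nofun trivial))
    | u1 => exact Or.inl (dist1 (adjL nofun trivial))
    | u2 => exact Or.inl (dist1 (adjL nofun trivial))
    | v => exact Or.inl (dist2 ⟨.u1, trivial⟩ (adjL nofun trivial) (adjL nofun trivial))
    | w => exact Or.inr (Or.inr (Or.inr (Or.inl ⟨rfl, rfl⟩)))
  | u1 =>
    cases b with
    | elt i => exact Or.inl (dist3 ⟨.hyp j0, trivial⟩ ⟨.copy jN, trivial⟩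
        (adjL nofun trivial) (adjL nofun trivial) (adjR nofun (hmem i)))
    | hyp j => exact Or.inl (dist1 (adjL nofun trivial))
    | copy j => exact Or.inl (dist2 ⟨.hyp j0, trivial⟩ (adjL nofun trivial) (adjL nofun trivial))
    | sub i j => exact Or.inl (dist2 ⟨.qstar, trivial⟩ (adjR nofun trivial) (adjL nofun trivial))
    | qstar => exact Or.inl (dist1 (adjR nofun trivial))
    | u1 => exact Or.inl (dist2 ⟨.v, trivial⟩ (adjL nofun trivial) (adjR nofun trivial))
    | u2 => exact Or.inl (dist2 ⟨.v, trivial⟩ (adjL nofun trivial) (adjR nofun trivial))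
    | v => exact Or.inl (dist1 (adjL nofun trivial))
    | w => exact Or.inl (dist3 ⟨.hyp j0, trivial⟩ ⟨.copy j0, trivial⟩
        (adjL nofun trivial) (adjL nofun trivial) (adjR nofun trivial))
  | u2 =>
    cases b with
    | elt i => exact Or.inl (dist3 ⟨.hyp j0, trivial⟩ ⟨.copy jN, trivial⟩
        (adjL nofun trivial) (adjL nofun trivial) (adjR nofun (hmem i)))
    | hyp j => exact Or.inl (dist1 (adjL nofun trivial))
    | copy j => exact Or.inl (dist2 ⟨.hyp j0, trivial⟩ (adjL nofun trivial) (adjL nofun trivial))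
    | sub i j => exact Or.inl (dist2 ⟨.qstar, trivial⟩ (adjR nofun trivial) (adjL nofun trivial))
    | qstar => exact Or.inl (dist1 (adjR nofun trivial))
    | u1 => exact Or.inl (dist2 ⟨.v, trivial⟩ (adjL nofun trivial) (adjR nofun trivial))
    | u2 => exact Or.inl (dist2 ⟨.v, trivial⟩ (adjL nofun trivial) (adjR nofun trivial))
    | v => exact Or.inl (dist1 (adjL nofun trivial))
    | w => exact Or.inl (dist3 ⟨.hyp j0, trivial⟩ ⟨.copy j0, trivial⟩
        (adjL nofun trivial) (adjL nofun trivial) (adjR nofun trivial))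
  | v =>
    cases b with
    | elt i => exact Or.inr (Or.inr (Or.inr (Or.inr (Or.inr (Or.inl ⟨i, rfl, rfl⟩)))))
    | hyp j => exact Or.inl (dist2 ⟨.u1, trivial⟩ (adjR nofun trivial) (adjL nofun trivial))
    | copy j => exact Or.inl (dist3 ⟨.u1, trivial⟩ ⟨.hyp j0, trivial⟩
        (adjR nofun trivial) (adjL nofun trivial) (adjL nofun trivial))
    | sub i j => exact Or.inl (dist3 ⟨.u1, trivial⟩ ⟨.qstar, trivial⟩
        (adjR nofun trivial) (adjR nofun trivial) (adjL nofun trivial))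
    | qstar => exact Or.inl (dist2 ⟨.u1, trivial⟩ (adjR nofun trivial) (adjR nofun trivial))
    | u1 => exact Or.inl (dist1 (adjR nofun trivial))
    | u2 => exact Or.inl (dist1 (adjR nofun trivial))
    | v => exact Or.inl (dist2 ⟨.u1, trivial⟩ (adjR nofun trivial) (adjL nofun trivial))
    | w => exact Or.inr (Or.inl ⟨rfl, rfl⟩)
  | w =>
    cases b with
    | elt i => exact Or.inl (dist2 ⟨.copy jN, trivial⟩ (adjL nofun trivial) (adjR nofun (hmem i)))
    | hyp j => exact Or.inl (dist2 ⟨.copy j0, trivial⟩ (adjL nofun trivial) (adjR nofun trivial))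
    | copy j => exact Or.inl (dist1 (adjL nofun trivial))
    | sub i j => exact Or.inl (dist3 ⟨.copy j0, trivial⟩ ⟨.hyp j, trivial⟩
        (adjL nofun trivial) (adjR nofun trivial) (adjR nofun rfl))
    | qstar => exact Or.inr (Or.inr (Or.inr (Or.inr (Or.inl ⟨rfl, rfl⟩))))
    | u1 => exact Or.inl (dist3 ⟨.copy j0, trivial⟩ ⟨.hyp j0, trivial⟩
        (adjL nofun trivial) (adjR nofun trivial) (adjR nofun trivial))
    | u2 => exact Or.inl (dist3 ⟨.copy j0, trivial⟩ ⟨.hyp j0, trivial⟩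
        (adjL nofun trivial) (adjR nofun trivial) (adjR nofun trivial))
    | v => exact Or.inr (Or.inr (Or.inl ⟨rfl, rfl⟩))
    | w => exact Or.inl (dist2 ⟨.copy j0, trivial⟩ (adjL nofun trivial) (adjR nofun trivial))
  
end Main

theorem stmt_8 {m n : ℕ} (S : Fin n → Set (Fin m)) (hn : 2 ≤ n)
    (hSne : ∀ j, (S j).Nonempty) (hSlast : S ⟨n - 1, by omega⟩ = Set.univ) (x y : GVertex S) (hxy : x ≠ y) :
    4 ≤ (GQS S).dist x y ↔
      ({x.1, y.1} : Set (HVertex m n)) = {.v, .w} ∨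
      ({x.1, y.1} : Set (HVertex m n)) = {.qstar, .w} ∨
      ∃ i : Fin m, ({x.1, y.1} : Set (HVertex m n)) = {.v, .elt i} := by
  have h0 : 0 < n := by omega
  have hN : n - 1 < n := by omega
  have hSl : S ⟨n - 1, hN⟩ = Set.univ := hSlast
  have hmem : ∀ i : Fin m, i ∈ S ⟨n - 1, hN⟩ := fun i => by rw [hSl]; trivial
  have lip1 : ∀ a b : HVertex m n, baseAdj S a b → |lev1 a - lev1 b| ≤ 1 :=
    fun a b h => lev1_lip h
  have lip2 : ∀ a b : HVertex m n, baseAdj S a b → |lev2 a - lev2 b| ≤ 1 :=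
    fun a b h => lev2_lip h
  have e_vu1 : (GQS S).Adj ⟨.v, trivial⟩ ⟨.u1, trivial⟩ := adjR nofun trivial
  have e_u1h : (GQS S).Adj ⟨.u1, trivial⟩ ⟨.hyp ⟨0, h0⟩, trivial⟩ := adjL nofun trivial
  have e_u1hN : (GQS S).Adj ⟨.u1, trivial⟩ ⟨.hyp ⟨n - 1, hN⟩, trivial⟩ := adjL nofun trivial
  have e_hc : (GQS S).Adj ⟨.hyp ⟨0, h0⟩, trivial⟩ ⟨.copy ⟨0, h0⟩, trivial⟩ := adjL nofun trivial
  have e_cw : (GQS S).Adj ⟨.copy ⟨0, h0⟩, trivial⟩ ⟨.w, trivial⟩ := adjR nofun trivial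
  have e_qu1 : (GQS S).Adj ⟨.qstar, trivial⟩ ⟨.u1, trivial⟩ := adjL nofun trivial
  have e_hs : ∀ i : Fin m, (GQS S).Adj ⟨.hyp ⟨n - 1, hN⟩, trivial⟩ ⟨.sub i ⟨n - 1, hN⟩, hmem i⟩ :=
    fun i => adjR nofun rfl
  have e_se : ∀ i : Fin m, (GQS S).Adj ⟨.sub i ⟨n - 1, hN⟩, hmem i⟩ ⟨.elt i, trivial⟩ :=
    fun i => adjL nofun rfl
  have reach_vw : (GQS S).Reachable ⟨.v, trivial⟩ ⟨.w, trivial⟩ :=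
    ⟨.cons e_vu1 (.cons e_u1h (.cons e_hc (.cons e_cw .nil)))⟩
  have reach_qw : (GQS S).Reachable ⟨.qstar, trivial⟩ ⟨.w, trivial⟩ :=
    ⟨.cons e_qu1 (.cons e_u1h (.cons e_hc (.cons e_cw .nil)))⟩
  have reach_ve : ∀ i : Fin m, (GQS S).Reachable ⟨.v, trivial⟩ ⟨.elt i, trivial⟩ := fun i =>
    ⟨.cons e_vu1 (.cons e_u1hN (.cons (e_hs i) (.cons (e_se i) .nil)))⟩
  constructor
  · intro h4
    rcases ub hn hSlast x y with h | ⟨h1, h2⟩ | ⟨h1, h2⟩ | ⟨h1, h2⟩ | ⟨h1, h2⟩ | ⟨i, h1, h2⟩ | ⟨i, h1, h2⟩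
    · omega
    · exact Or.inl (by rw [h1, h2])
    · exact Or.inl (by rw [h1, h2, Set.pair_comm])
    · exact Or.inr (Or.inl (by rw [h1, h2]))
    · exact Or.inr (Or.inl (by rw [h1, h2, Set.pair_comm]))
    · exact Or.inr (Or.inr ⟨i, by rw [h1, h2]⟩)
    · exact Or.inr (Or.inr ⟨i, by rw [h1, h2, Set.pair_comm]⟩)
  · intro h
    rcases h with h | h | ⟨i, h⟩ <;> rw [Set.pair_eq_pair_iff] at h
    · rcases h with ⟨h1, h2⟩ | ⟨h1, h2⟩
      · rw [show x = (⟨.v, trivial⟩ : GVertex S) from Subtype.ext h1,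
           show y = (⟨.w, trivial⟩ : GVertex S) from Subtype.ext h2]
        exact dist_ge lev1 lip1 reach_vw (by norm_num [lev1])
      · rw [show x = (⟨.w, trivial⟩ : GVertex S) from Subtype.ext h1,
           show y = (⟨.v, trivial⟩ : GVertex S) from Subtype.ext h2]
        exact dist_ge lev1 lip1 reach_vw.symm (by norm_num [lev1])
    · rcases h with ⟨h1, h2⟩ | ⟨h1, h2⟩
      · rw [show x = (⟨.qstar, trivial⟩ : GVertex S) from Subtype.ext h1,
           show y = (⟨.w, trivial⟩ : GVertex S) from Subtype.ext h2]
        exact dist_ge lev2 lip2 reach_qw (by norm_num [lev2])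
      · rw [show x = (⟨.w, trivial⟩ : GVertex S) from Subtype.ext h1,
           show y = (⟨.qstar, trivial⟩ : GVertex S) from Subtype.ext h2]
        exact dist_ge lev2 lip2 reach_qw.symm (by norm_num [lev2])
    · rcases h with ⟨h1, h2⟩ | ⟨h1, h2⟩
      · rw [show x = (⟨.v, trivial⟩ : GVertex S) from Subtype.ext h1,
           show y = (⟨.elt i, trivial⟩ : GVertex S) from Subtype.ext h2]
        exact dist_ge lev1 lip1 (reach_ve i) (by norm_num [lev1])
      · rw [show x = (⟨.elt i, trivial⟩ : GVertex S) from Subtype.ext h1,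
           show y = (⟨.v, trivial⟩ : GVertex S) from Subtype.ext h2]
        exact dist_ge lev1 lip1 (reach_ve i).symm (by norm_num [lev1])
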